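/- Let V₁, V₂, V₃, V₄ ∈ ℝ² and assume the projected quadrilateral is concave with δ₁ of different sign from δ₂, δ₃, δ₄, i.e. δ₂·δ₃ > 0, δ₃·δ₄ > 0 and δ₁·δ₂ < 0. If either [det(V₁,V₂)·det(V₂,V₃) < 0 and det(V₃,V₄)·det(V₄,V₁) > 0] (crossed subregion) or [det(V₂,V₃)·det(V₃,V₄) > 0 and det(V₄,V₁)·det(V₁,V₂) > 0] (convex subregion), then there exists exactly one point (s,t) ∈ (0,1) × (0,1) with G(s,t) = (0,0); i.e., a unique sliding vector field is defined on the codimension-2 discontinuity Λ. -/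

import Mathlib

/-- Determinant of two vectors in ℝ². -/
noncomputable def det2 (U W : ℝ × ℝ) : ℝ := U.1 * W.2 - U.2 * W.1

/-- The canopy bilinear map G(s,t) = st·V₁ + (1-s)t·V₂ + (1-s)(1-t)·V₃ + s(1-t)·V₄. -/
noncomputable def Gmap (V₁ V₂ V₃ V₄ : ℝ × ℝ) (s t : ℝ) : ℝ × ℝ :=
  (s * t) • V₁ + ((1 - s) * t) • V₂ + ((1 - s) * (1 - t)) • V₃ + (s * (1 - t)) • V₄


lemma quad_unique (α β γ x y u v : ℝ)
    (hx : α*x^2 + β*x + γ = 0) (hy : α*y^2 + β*y + γ = 0)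
    (hux : u < x) (hxv : x < v) (huy : u < y) (hyv : y < v)
    (hu : α*u^2 + β*u + γ < 0) (hv : 0 < α*v^2 + β*v + γ) : x = y := by
  by_contra hne
  have hxy : x - y ≠ 0 := sub_ne_zero.mpr hne
  have h1 : β = -(α*(x+y)) := by
    have h : (x - y) * (α*(x+y) + β) = 0 := by linear_combination hx - hy
    rcases mul_eq_zero.mp h with h' | h'
    · exact absurd h' hxy
    · linarith
  subst h1
  have h2 : γ = α*(x*y) := by linear_combination hx
  subst h2
  have key : (α*u^2 + (-(α*(x+y)))*u + α*(x*y)) * (α*v^2 + (-(α*(x+y)))*v + α*(x*y))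
      = α^2 * (((x-u)*(v-x)) * ((y-u)*(v-y))) := by ring
  have hpos : 0 < ((x-u)*(v-x)) * ((y-u)*(v-y)) :=
    mul_pos (mul_pos (sub_pos.mpr hux) (sub_pos.mpr hxv)) (mul_pos (sub_pos.mpr huy) (sub_pos.mpr hyv))
  nlinarith [sq_nonneg α, mul_pos (neg_pos.mpr hu) hv]


lemma signs_main (a b c d e f : ℝ) (hpl : e*f = a*c - b*d)
    (h1 : a + b - e < 0) (h2 : 0 < b + c - f) (h3 : 0 < c + d + e) (h4 : 0 < d + a + f)
    (hcond : (a*b < 0 ∧ 0 < c*d) ∨ (0 < b*c ∧ 0 < d*a)) :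
    0 < c ∧ 0 < d ∧ 0 < e ∧ (0 < b ∨ (b < 0 ∧ 0 < a)) := by
  rcases hcond with ⟨hab, hcd⟩ | ⟨hbc, hda⟩
  · -- branch 1 (crossed): a*b<0, c*d>0
    have hc : 0 < c := by
      by_contra hc
      push_neg at hc
      have hc' : c < 0 := by
        rcases lt_or_eq_of_le hc with h | h
        · exact h
        · exfalso; rw [h] at hcd; simp at hcd
      have hd' : d < 0 := by nlinarith
      rcases lt_trichotomy a 0 with ha | rfl | ha
      case inr.inl => simp at hab
      · -- a<0, b>0
        have hb : 0 < b := by nlinarith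
        nlinarith [mul_pos h3 h4, mul_pos h3 h2, sq_nonneg (e+f), sq_nonneg (e-f)]
      · -- a>0, b<0
        have hb : b < 0 := by nlinarith
        nlinarith [mul_pos h3 h2, mul_pos h2 h4, sq_nonneg (e+f), sq_nonneg (e-f)]
    have hd : 0 < d := by nlinarith
    refine ⟨hc, hd, ?_, ?_⟩
    · -- e > 0
      rcases lt_trichotomy b 0 with hb | rfl | hb
      case inr.inl => simp at hab
      · -- b<0, a>0 : R5
        have ha : 0 < a := by nlinarith
        by_contra he
        push_neg at he
        nlinarith [mul_pos h3 (neg_pos.mpr hb), mul_pos ha h3]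
      · -- b>0, a<0 : R4
        have ha : a < 0 := by nlinarith
        by_contra he
        push_neg at he
        nlinarith [mul_pos h3 hb, mul_pos hc (neg_pos.mpr ha)]
    · rcases lt_trichotomy b 0 with hb | rfl | hb
      case inr.inl => simp at hab
      · exact Or.inr ⟨hb, by nlinarith⟩
      · exact Or.inl hb
  · -- branch 2 (convex): b*c>0, d*a>0
    have hc : 0 < c := by
      by_contra hc
      push_neg at hc
      have hc' : c < 0 := by
        rcases lt_or_eq_of_le hc with h | h
        · exact h
        · exfalso; rw [h] at hbc; simp at hbc
      have hb' : b < 0 := by nlinarith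
      rcases lt_trichotomy a 0 with ha | rfl | ha
      case inr.inl => simp at hda
      · have hd' : d < 0 := by nlinarith
        nlinarith [mul_pos h3 h4, mul_pos h2 h4, sq_nonneg (e+f), sq_nonneg (e-f)]
      · have hd' : 0 < d := by nlinarith
        nlinarith [mul_pos h3 h4, mul_pos h2 h3, mul_pos h2 h4, sq_nonneg (e+f), sq_nonneg (e-f)]
    have hb : 0 < b := by nlinarith
    have ha : 0 < a := by
      by_contra ha
      push_neg at ha
      have ha' : a < 0 := by
        rcases lt_or_eq_of_le ha with h | h
        · exact h
        · exfalso; rw [h] at hda; simp at hda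
      have hd' : d < 0 := by nlinarith
      nlinarith [mul_pos h2 h3, mul_pos hb hc, mul_pos h3 h4, mul_pos h2 h4, sq_nonneg (e+f), sq_nonneg (e-f)]
    have hd : 0 < d := by nlinarith
    exact ⟨hc, hd, by nlinarith, Or.inl hb⟩

lemma gmap_eq (x₁ y₁ x₂ y₂ x₃ y₃ x₄ y₄ s t : ℝ) :
    Gmap (x₁,y₁) (x₂,y₂) (x₃,y₃) (x₄,y₄) s t =
      (s*t*x₁ + (1-s)*t*x₂ + (1-s)*(1-t)*x₃ + s*(1-t)*x₄,
       s*t*y₁ + (1-s)*t*y₂ + (1-s)*(1-t)*y₃ + s*(1-t)*y₄) := by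
  simp only [Gmap, Prod.smul_mk, smul_eq_mul, Prod.mk_add_mk, Prod.mk.injEq]

lemma zero_iff (x₁ y₁ x₂ y₂ x₃ y₃ x₄ y₄ s t b c d e f : ℝ)
    (hb : b = x₂*y₃ - y₂*x₃) (hc : c = x₃*y₄ - y₃*x₄) (hd : d = x₄*y₁ - y₄*x₁)
    (he : e = x₁*y₃ - y₁*x₃) (hf : f = x₂*y₄ - y₂*x₄)
    (hc0 : c ≠ 0) (hs : 0 < s) (ht : 0 < t) :
    Gmap (x₁,y₁) (x₂,y₂) (x₃,y₃) (x₄,y₄) s t = 0 ↔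
      ((d+e+f-b)*s^2 + (2*b-e-f)*s - b = 0 ∧ t * (b*(1-s) + e*s + c*s) = c*s) := by
  subst hb hc hd he hf
  rw [gmap_eq, Prod.ext_iff]
  simp only [Prod.fst_zero, Prod.snd_zero]
  constructor
  · rintro ⟨e1, e2⟩
    have hIII : t * ((x₂*y₃ - y₂*x₃)*(1-s) + (x₁*y₃ - y₁*x₃)*s + (x₃*y₄ - y₃*x₄)*s)
        = (x₃*y₄ - y₃*x₄)*s := by linear_combination y₃*e1 - x₃*e2
    have hIV : t * (((x₃*y₄ - y₃*x₄)-(x₂*y₄ - y₂*x₄))*(1-s) + (x₄*y₁ - y₄*x₁)*s)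
        = (x₃*y₄ - y₃*x₄)*(1-s) := by linear_combination x₄*e2 - y₄*e1
    refine ⟨?_, hIII⟩
    have hQ : (((x₄*y₁ - y₄*x₁)+(x₁*y₃ - y₁*x₃)+(x₂*y₄ - y₂*x₄)-(x₂*y₃ - y₂*x₃))*s^2
        + (2*(x₂*y₃ - y₂*x₃)-(x₁*y₃ - y₁*x₃)-(x₂*y₄ - y₂*x₄))*s - (x₂*y₃ - y₂*x₃)) * t = 0 := by
      linear_combination s*hIV - (1-s)*hIII
    exact (mul_eq_zero.mp hQ).resolve_right (ne_of_gt ht)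
  · rintro ⟨hQ, hIII⟩
    have hIVs : s * (t * (((x₃*y₄ - y₃*x₄)-(x₂*y₄ - y₂*x₄))*(1-s) + (x₄*y₁ - y₄*x₁)*s)
        - (x₃*y₄ - y₃*x₄)*(1-s)) = 0 := by
      linear_combination t*hQ + (1-s)*hIII
    have hIV : t * (((x₃*y₄ - y₃*x₄)-(x₂*y₄ - y₂*x₄))*(1-s) + (x₄*y₁ - y₄*x₁)*s)
        = (x₃*y₄ - y₃*x₄)*(1-s) := by
      have := (mul_eq_zero.mp hIVs).resolve_left (ne_of_gt hs)
      linarith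
    constructor
    · have h1 : (s*t*x₁ + (1-s)*t*x₂ + (1-s)*(1-t)*x₃ + s*(1-t)*x₄) * (x₃*y₄ - y₃*x₄) = 0 := by
        linear_combination (-x₃)*hIV - x₄*hIII
      exact (mul_eq_zero.mp h1).resolve_right hc0
    · have h2 : (s*t*y₁ + (1-s)*t*y₂ + (1-s)*(1-t)*y₃ + s*(1-t)*y₄) * (x₃*y₄ - y₃*x₄) = 0 := by
        linear_combination (-y₃)*hIV - y₄*hIII
      exact (mul_eq_zero.mp h2).resolve_right hc0

lemma key (x₁ y₁ x₂ y₂ x₃ y₃ x₄ y₄ a b c d e f : ℝ)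
    (ha : a = x₁*y₂ - y₁*x₂) (hb : b = x₂*y₃ - y₂*x₃) (hc : c = x₃*y₄ - y₃*x₄)
    (hd : d = x₄*y₁ - y₄*x₁) (he : e = x₁*y₃ - y₁*x₃) (hf : f = x₂*y₄ - y₂*x₄)
    (h1 : a + b - e < 0) (h2 : 0 < b + c - f) (h3 : 0 < c + d + e) (h4 : 0 < d + a + f)
    (hcond : (a*b < 0 ∧ 0 < c*d) ∨ (0 < b*c ∧ 0 < d*a)) :
    ∃! p : ℝ × ℝ, p.1 ∈ Set.Ioo (0 : ℝ) 1 ∧ p.2 ∈ Set.Ioo (0 : ℝ) 1 ∧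
      Gmap (x₁,y₁) (x₂,y₂) (x₃,y₃) (x₄,y₄) p.1 p.2 = 0 := by
  have hpl : e*f = a*c - b*d := by subst ha hb hc hd he hf; ring
  obtain ⟨hcpos, hdpos, hepos, hbor⟩ := signs_main a b c d e f hpl h1 h2 h3 h4 hcond
  have hc0 : c ≠ 0 := ne_of_gt hcpos
  -- the pivot point σ
  obtain ⟨σ, hσ0, hσ1, hQσ, hφpos, hφconv⟩ :
      ∃ σ : ℝ, 0 ≤ σ ∧ σ < 1 ∧ ((d+e+f-b)*σ^2 + (2*b-e-f)*σ - b < 0) ∧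
        (∀ s : ℝ, σ < s → s < 1 → 0 < b*(1-s) + e*s) ∧
        (∀ s : ℝ, 0 < s → s < 1 → 0 < b*(1-s) + e*s → σ < s) := by
    rcases hbor with hbpos | ⟨hbneg, hapos⟩
    · refine ⟨0, le_refl _, one_pos, by norm_num; linarith, ?_, fun s hs _ _ => hs⟩
      intro s hs hs1
      nlinarith
    · have heb : 0 < e - b := by linarith
      have hσeb : (-b/(e-b)) * (e-b) = -b := by field_simp
      refine ⟨-b/(e-b), div_nonneg (by linarith) (le_of_lt heb), ?_, ?_, ?_, ?_⟩
      · rw [div_lt_one heb]; linarith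
      · have hkey : ((d+e+f-b)*(-b/(e-b))^2 + (2*b-e-f)*(-b/(e-b)) - b) * (e-b)^2
            = a*b*c := by
          linear_combination ((d+e+f-b)*((-b/(e-b))*(e-b)) + ((2*b-e-f)*(e-b) - b*(d+e+f-b)))*hσeb + b*hpl
        have habc : a*b*c < 0 := by nlinarith [mul_pos hapos hcpos]
        nlinarith [pow_pos heb 2]
      · intro s hs hs1
        rw [div_lt_iff₀ heb] at hs
        nlinarith
      · intro s hs0 hs1 hφ
        rw [div_lt_iff₀ heb]
        nlinarith
  -- existence of the root s₀ via IVT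
  have hQ1 : (d+e+f-b)*(1:ℝ)^2 + (2*b-e-f)*(1:ℝ) - b = d := by ring
  have hcont : ContinuousOn (fun s : ℝ => (d+e+f-b)*s^2 + (2*b-e-f)*s - b)
      (Set.Icc σ 1) := by fun_prop
  have hmem : (0:ℝ) ∈ Set.Ioo ((d+e+f-b)*σ^2 + (2*b-e-f)*σ - b)
      ((d+e+f-b)*(1:ℝ)^2 + (2*b-e-f)*(1:ℝ) - b) := by
    constructor
    · exact hQσ
    · rw [hQ1]; exact hdpos
  obtain ⟨s₀, hs₀mem, hQs₀⟩ := intermediate_value_Ioo (le_of_lt hσ1) hcont hmem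
  obtain ⟨hσs₀, hs₀1⟩ := hs₀mem
  have hs₀0 : 0 < s₀ := lt_of_le_of_lt hσ0 hσs₀
  have hφ₀ : 0 < b*(1-s₀) + e*s₀ := hφpos s₀ hσs₀ hs₀1
  have hden : 0 < b*(1-s₀) + e*s₀ + c*s₀ := by nlinarith
  set t₀ : ℝ := c*s₀ / (b*(1-s₀) + e*s₀ + c*s₀) with ht₀def
  have ht₀pos : 0 < t₀ := by
    apply div_pos _ hden
    exact mul_pos hcpos hs₀0
  have ht₀1 : t₀ < 1 := by
    rw [ht₀def, div_lt_one hden]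
    linarith
  have hIII₀ : t₀ * (b*(1-s₀) + e*s₀ + c*s₀) = c*s₀ := by
    rw [ht₀def]; exact div_mul_cancel₀ _ (ne_of_gt hden)
  have hG₀ : Gmap (x₁,y₁) (x₂,y₂) (x₃,y₃) (x₄,y₄) s₀ t₀ = 0 := by
    rw [zero_iff x₁ y₁ x₂ y₂ x₃ y₃ x₄ y₄ s₀ t₀ b c d e f hb hc hd he hf hc0 hs₀0 ht₀pos]
    exact ⟨hQs₀, hIII₀⟩
  refine ⟨(s₀, t₀), ⟨⟨hs₀0, hs₀1⟩, ⟨ht₀pos, ht₀1⟩, hG₀⟩, ?_⟩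
  rintro ⟨s, t⟩ ⟨⟨hs0, hs1⟩, ⟨ht0, ht1⟩, hG⟩
  rw [zero_iff x₁ y₁ x₂ y₂ x₃ y₃ x₄ y₄ s t b c d e f hb hc hd he hf hc0 hs0 ht0] at hG
  obtain ⟨hQs, hIII⟩ := hG
  have hdenst : 0 < b*(1-s) + e*s + c*s := by
    by_contra hle
    push_neg at hle
    have h1 : t * (b*(1-s) + e*s + c*s) ≤ 0 :=
      mul_nonpos_iff.mpr (Or.inl ⟨ht0.le, hle⟩)
    linarith [mul_pos hcpos hs0]
  have hφs : 0 < b*(1-s) + e*s := by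
    have h1 : t * (b*(1-s) + e*s + c*s) < 1 * (b*(1-s) + e*s + c*s) :=
      mul_lt_mul_of_pos_right ht1 hdenst
    linarith
  have hσs : σ < s := hφconv s hs0 hs1 hφs
  have hseq : s = s₀ := by
    apply quad_unique (d+e+f-b) (2*b-e-f) (-b) s s₀ σ 1
    · linear_combination hQs
    · linear_combination hQs₀
    · exact hσs
    · exact hs1
    · exact hσs₀
    · exact hs₀1
    · linarith [hQσ]
    · have hh : (d+e+f-b)*(1:ℝ)^2 + (2*b-e-f)*1 + -b = d := by ring
      linarith
  subst hseq
  have hteq : t = t₀ := by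
    have := hIII.trans hIII₀.symm
    exact mul_right_cancel₀ (ne_of_gt hden) this
  simp [hteq]

/-- Concave case with δ₁ of different sign from δ₂, δ₃, δ₄: in the crossed subregion
(det(V₁,V₂)·det(V₂,V₃) < 0 and det(V₃,V₄)·det(V₄,V₁) > 0) or in the convex subregion
(det(V₂,V₃)·det(V₃,V₄) > 0 and det(V₄,V₁)·det(V₁,V₂) > 0), the canopy map has
exactly one zero in (0,1)², i.e. a unique sliding vector field on Λ. -/
theorem stmt13 (V₁ V₂ V₃ V₄ : ℝ × ℝ) (χ₁ χ₂ χ₃ χ₄ : ℝ × ℝ) (δ₁ δ₂ δ₃ δ₄ : ℝ)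
    (hχ₁ : χ₁ = V₂ - V₁) (hχ₂ : χ₂ = V₃ - V₂) (hχ₃ : χ₃ = V₄ - V₃) (hχ₄ : χ₄ = V₁ - V₄)
    (hδ₁ : δ₁ = det2 χ₁ χ₂) (hδ₂ : δ₂ = det2 χ₂ χ₃)
    (hδ₃ : δ₃ = det2 χ₃ χ₄) (hδ₄ : δ₄ = det2 χ₄ χ₁)
    (hcv₁ : 0 < δ₂ * δ₃) (hcv₂ : 0 < δ₃ * δ₄) (hcv₃ : δ₁ * δ₂ < 0)
    (hcond : (det2 V₁ V₂ * det2 V₂ V₃ < 0 ∧ 0 < det2 V₃ V₄ * det2 V₄ V₁) ∨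
             (0 < det2 V₂ V₃ * det2 V₃ V₄ ∧ 0 < det2 V₄ V₁ * det2 V₁ V₂)) :
    ∃! p : ℝ × ℝ, p.1 ∈ Set.Ioo (0 : ℝ) 1 ∧ p.2 ∈ Set.Ioo (0 : ℝ) 1 ∧
      Gmap V₁ V₂ V₃ V₄ p.1 p.2 = 0 := by
  obtain ⟨x₁, y₁⟩ := V₁
  obtain ⟨x₂, y₂⟩ := V₂
  obtain ⟨x₃, y₃⟩ := V₃
  obtain ⟨x₄, y₄⟩ := V₄
  subst hχ₁ hχ₂ hχ₃ hχ₄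
  obtain ⟨a, ha⟩ : ∃ a : ℝ, a = x₁*y₂ - y₁*x₂ := ⟨_, rfl⟩
  obtain ⟨b, hb⟩ : ∃ b : ℝ, b = x₂*y₃ - y₂*x₃ := ⟨_, rfl⟩
  obtain ⟨c, hc⟩ : ∃ c : ℝ, c = x₃*y₄ - y₃*x₄ := ⟨_, rfl⟩
  obtain ⟨d, hd⟩ : ∃ d : ℝ, d = x₄*y₁ - y₄*x₁ := ⟨_, rfl⟩
  obtain ⟨e, he⟩ : ∃ e : ℝ, e = x₁*y₃ - y₁*x₃ := ⟨_, rfl⟩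
  obtain ⟨f, hf⟩ : ∃ f : ℝ, f = x₂*y₄ - y₂*x₄ := ⟨_, rfl⟩
  have E1 : δ₁ = a + b - e := by
    rw [hδ₁, ha, hb, he]; simp only [det2, Prod.mk_sub_mk]; ring
  have E2 : δ₂ = b + c - f := by
    rw [hδ₂, hb, hc, hf]; simp only [det2, Prod.mk_sub_mk]; ring
  have E3 : δ₃ = c + d + e := by
    rw [hδ₃, hc, hd, he]; simp only [det2, Prod.mk_sub_mk]; ring
  have E4 : δ₄ = d + a + f := by
    rw [hδ₄, hd, ha, hf]; simp only [det2, Prod.mk_sub_mk]; ring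
  have HA : det2 (x₁,y₁) (x₂,y₂) = a := by rw [ha]; rfl
  have HB : det2 (x₂,y₂) (x₃,y₃) = b := by rw [hb]; rfl
  have HC : det2 (x₃,y₃) (x₄,y₄) = c := by rw [hc]; rfl
  have HD : det2 (x₄,y₄) (x₁,y₁) = d := by rw [hd]; rfl
  rw [HA, HB, HC, HD] at hcond
  rcases mul_neg_iff.mp hcv₃ with ⟨hδ₁pos, hδ₂neg⟩ | ⟨hδ₁neg, hδ₂pos⟩
  · -- δ₁ > 0 : apply key to the coordinate-swapped vectors
    have hδ₃neg : δ₃ < 0 := by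
      rcases mul_pos_iff.mp hcv₁ with ⟨h', h''⟩ | ⟨h', h''⟩
      · linarith
      · exact h''
    have hδ₄neg : δ₄ < 0 := by
      rcases mul_pos_iff.mp hcv₂ with ⟨h', h''⟩ | ⟨h', h''⟩
      · linarith
      · exact h''
    rw [E1] at hδ₁pos; rw [E2] at hδ₂neg; rw [E3] at hδ₃neg; rw [E4] at hδ₄neg
    have hres := key y₁ x₁ y₂ x₂ y₃ x₃ y₄ x₄ (-a) (-b) (-c) (-d) (-e) (-f)
      (by rw [ha]; ring) (by rw [hb]; ring) (by rw [hc]; ring)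
      (by rw [hd]; ring) (by rw [he]; ring) (by rw [hf]; ring)
      (by linarith) (by linarith) (by linarith) (by linarith)
      (by rcases hcond with ⟨u, v⟩ | ⟨u, v⟩
          · left
            constructor
            · have : (-a) * (-b) = a * b := by ring
              rw [this]; exact u
            · have : (-c) * (-d) = c * d := by ring
              rw [this]; exact v
          · right
            constructor
            · have : (-b) * (-c) = b * c := by ring
              rw [this]; exact u
            · have : (-d) * (-a) = d * a := by ring
              rw [this]; exact v)
    have hswap : ∀ s t : ℝ, (Gmap (x₁,y₁) (x₂,y₂) (x₃,y₃) (x₄,y₄) s t = 0 ↔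
        Gmap (y₁,x₁) (y₂,x₂) (y₃,x₃) (y₄,x₄) s t = 0) := by
      intro s t
      rw [gmap_eq, gmap_eq, Prod.mk_eq_zero, Prod.mk_eq_zero]
      exact and_comm
    obtain ⟨p, hp, hu⟩ := hres
    exact ⟨p, ⟨hp.1, hp.2.1, (hswap _ _).mpr hp.2.2⟩,
      fun q hq => hu q ⟨hq.1, hq.2.1, (hswap _ _).mp hq.2.2⟩⟩
  · -- δ₁ < 0 : apply key directly
    have hδ₃pos : 0 < δ₃ := by
      rcases mul_pos_iff.mp hcv₁ with ⟨h', h''⟩ | ⟨h', h''⟩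
      · exact h''
      · linarith
    have hδ₄pos : 0 < δ₄ := by
      rcases mul_pos_iff.mp hcv₂ with ⟨h', h''⟩ | ⟨h', h''⟩
      · exact h''
      · linarith
    rw [E1] at hδ₁neg; rw [E2] at hδ₂pos; rw [E3] at hδ₃pos; rw [E4] at hδ₄pos
    exact key x₁ y₁ x₂ y₂ x₃ y₃ x₄ y₄ a b c d e f ha hb hc hd he hf
      hδ₁neg hδ₂pos hδ₃pos hδ₄pos hcond
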